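/- Let K ≥ 2 be an integer, η ∈ [0,1], and Θ ∈ [0,1). Suppose p = (p_1,...,p_K) is a probability distribution with p_j ∈ [η/K, 1-(K-1)η/K] for all j. Then ∑_{j=1}^K p_j / (1 - (1 - p_j)Θ) ≤ 1/(1 - (1 - 1/K)Θ) + 1. -/

import Mathlib

theorem sum_ratio_theta_bound (K : ℕ) (hK : 2 ≤ K) (η Θ : ℝ)
    (hη : η ∈ Set.Icc (0 : ℝ) 1) (hΘ : Θ ∈ Set.Ico (0 : ℝ) 1)
    (p : Fin K → ℝ) (hpsum : ∑ j, p j = 1)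
    (hp : ∀ j, p j ∈ Set.Icc (η / K) (1 - (K - 1) * η / K)) :
    ∑ j, p j / (1 - (1 - p j) * Θ) ≤ 1 / (1 - (1 - 1 / K) * Θ) + 1 := by
  obtain ⟨hη0, hη1⟩ := hη
  obtain ⟨hΘ0, hΘ1⟩ := hΘ
  have hK0 : (0 : ℝ) < K := by
    have : (2 : ℝ) ≤ K := by exact_mod_cast hK
    linarith
  set a : ℝ := 1 / K with ha
  have ha0 : 0 < a := by positivity
  have ha1 : a ≤ 1 := by
    rw [ha, div_le_one hK0]
    have : (2 : ℝ) ≤ K := by exact_mod_cast hK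
    linarith
  set D : ℝ := 1 - (1 - a) * Θ with hDdef
  have hD : 0 < D := by nlinarith
  set c : ℝ := (1 - Θ) / D ^ 2 with hc
  have hp01 : ∀ j, 0 ≤ p j ∧ p j ≤ 1 := by
    intro j
    obtain ⟨h1, h2⟩ := hp j
    constructor
    · have : 0 ≤ η / K := by positivity
      linarith
    · have : 0 ≤ ((K : ℝ) - 1) * η / K := by
        apply div_nonneg _ (le_of_lt hK0)
        apply mul_nonneg _ hη0
        have : (2 : ℝ) ≤ K := by exact_mod_cast hK
        linarith
      linarith
  have key : ∀ j, p j / (1 - (1 - p j) * Θ) ≤ a / D + c * (p j - a) := by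
    intro j
    obtain ⟨hj0, hj1⟩ := hp01 j
    have hd : 0 < 1 - (1 - p j) * Θ := by nlinarith
    have step : p j / (1 - (1 - p j) * Θ) ≤ (a * D + (1 - Θ) * (p j - a)) / D ^ 2 := by
      rw [div_le_div_iff₀ hd (by positivity)]
      have hid : (a * D + (1 - Θ) * (p j - a)) * (1 - (1 - p j) * Θ) - p j * D ^ 2
          = Θ * (1 - Θ) * (p j - a) ^ 2 := by rw [hDdef]; ring
      nlinarith [mul_nonneg (mul_nonneg hΘ0 (by linarith : (0:ℝ) ≤ 1 - Θ)) (sq_nonneg (p j - a))]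
    have heq : (a * D + (1 - Θ) * (p j - a)) / D ^ 2 = a / D + c * (p j - a) := by
      rw [hc]
      field_simp
    linarith [step, heq.le, heq.ge]
  calc ∑ j, p j / (1 - (1 - p j) * Θ)
      ≤ ∑ j, (a / D + c * (p j - a)) := Finset.sum_le_sum fun j _ => key j
    _ = K * (a / D) + c * (∑ j, p j - K * a) := by
        rw [Finset.sum_add_distrib, Finset.sum_const, ← Finset.mul_sum, Finset.sum_sub_distrib,
          Finset.sum_const, Finset.card_univ, Fintype.card_fin]
        push_cast
        ring
    _ = 1 / D := by
        rw [hpsum, ha]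
        field_simp
        ring
    _ ≤ 1 / D + 1 := by linarith
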